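/- arXiv:1610.04491 — 5 statements merged into one kernel-verified Lean document; each statement's English description precedes it below -/
import Mathlib

section
/- Let d = 2, x₁ = (1,0), x₂ = (0,1), x₃ = (1−ε, αε) with α > 1, and θ = (1,0). For all sufficiently small ε > 0, the value c(A, θ) of the optimization problem minimizing Σ_{x suboptimal} α(x) Δ_x subject to ‖x‖²_{H(α)⁻¹} ≤ Δ_x²/2 for all suboptimal x equals 2α². -/
open Matrix
set_option maxHeartbeats 1000000

lemma hH (a ε : ℝ) (w : Fin 3 → ℝ) :
    (w 0 • vecMulVec ![1,0] ![1,0] + w 1 • vecMulVec ![0,1] ![0,1]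
      + w 2 • vecMulVec ![1-ε, a*ε] ![1-ε, a*ε] : Matrix (Fin 2) (Fin 2) ℝ)
    = !![w 0 + w 2 * (1-ε)^2, w 2 * (1-ε) * (a*ε);
         w 2 * (1-ε) * (a*ε), w 1 + w 2 * (a*ε)^2] := by
  ext i j
  fin_cases i <;> fin_cases j <;>
    · simp only [Matrix.add_apply, Matrix.smul_apply, vecMulVec_apply, smul_eq_mul,
        Matrix.cons_val_zero, Matrix.cons_val_one, Matrix.head_cons,
        Matrix.cons_val', Matrix.cons_val_fin_one, Matrix.empty_val',
        Fin.mk_zero, Fin.mk_one, Matrix.of_apply, Matrix.vecHead, Matrix.vecTail]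
      ring

lemma quad_form (p q s : ℝ) (v : Fin 2 → ℝ) :
    v ⬝ᵥ (!![p,q;q,s])⁻¹.mulVec v
      = (s*(v 0)^2 - 2*q*(v 0)*(v 1) + p*(v 1)^2)/(p*s - q*q) := by
  have hdet : (!![p,q;q,s] : Matrix (Fin 2) (Fin 2) ℝ).det = p*s - q*q := by
    rw [det_fin_two_of]
  rw [inv_def, adjugate_fin_two, hdet, Ring.inverse_eq_inv']
  simp [mulVec, dotProduct, Fin.sum_univ_two, ← add_div]
  ring

lemma cs_aux (p q s d ε a : ℝ) (hdd : d = p*s - q*q) (hdpos : 0 < d) (hs : 0 ≤ s)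
    (hε : 0 < ε)
    (h3 : s*(1-ε)^2 - 2*q*(1-ε)*(a*ε) + p*(a*ε)^2 ≤ ε^2/2 * d) : 2*a^2 ≤ s := by
  subst hdd
  nlinarith [sq_nonneg ((1-ε)*s - (a*ε)*q), mul_le_mul_of_nonneg_right h3 hs,
    mul_pos (mul_pos hε hε) hdpos]

lemma key (a : ℝ) (ha : 1 < a) (ε : ℝ) (hε : 0 < ε) (hεa : ε < 1 / a ^ 2) :
    sInf {r : ℝ | ∃ w : Fin 3 → ℝ, (∀ i, 0 ≤ w i) ∧
        (IsUnit (w 0 • vecMulVec ![1,0] ![1,0] + w 1 • vecMulVec ![0,1] ![0,1]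
            + w 2 • vecMulVec ![1-ε, a*ε] ![1-ε, a*ε] : Matrix (Fin 2) (Fin 2) ℝ).det ∧
          ![0,1] ⬝ᵥ ((w 0 • vecMulVec ![1,0] ![1,0] + w 1 • vecMulVec ![0,1] ![0,1]
            + w 2 • vecMulVec ![1-ε, a*ε] ![1-ε, a*ε] : Matrix (Fin 2) (Fin 2) ℝ))⁻¹.mulVec ![0,1]
            ≤ 1 ^ 2 / 2 ∧
          ![1-ε, a*ε] ⬝ᵥ ((w 0 • vecMulVec ![1,0] ![1,0] + w 1 • vecMulVec ![0,1] ![0,1]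
            + w 2 • vecMulVec ![1-ε, a*ε] ![1-ε, a*ε] : Matrix (Fin 2) (Fin 2) ℝ))⁻¹.mulVec ![1-ε, a*ε]
            ≤ ε ^ 2 / 2) ∧
        r = w 1 * 1 + w 2 * ε} = 2 * a ^ 2 := by
  have ha0 : (0:ℝ) < a := by linarith
  have ha2 : (1:ℝ) < a^2 := by nlinarith
  have hε1 : ε < 1 := by
    have h1 : 1 / a^2 < 1 := by
      rw [div_lt_one (by positivity)]; linarith
    linarith
  have hεa2 : ε * a^2 < 1 := (lt_div_iff₀ (by positivity)).mp hεa
  -- membership of any t > 2a²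
  have hmem : ∀ t : ℝ, 2*a^2 < t → t ∈ {r : ℝ | ∃ w : Fin 3 → ℝ, (∀ i, 0 ≤ w i) ∧
        (IsUnit (w 0 • vecMulVec ![1,0] ![1,0] + w 1 • vecMulVec ![0,1] ![0,1]
            + w 2 • vecMulVec ![1-ε, a*ε] ![1-ε, a*ε] : Matrix (Fin 2) (Fin 2) ℝ).det ∧
          ![0,1] ⬝ᵥ ((w 0 • vecMulVec ![1,0] ![1,0] + w 1 • vecMulVec ![0,1] ![0,1]
            + w 2 • vecMulVec ![1-ε, a*ε] ![1-ε, a*ε] : Matrix (Fin 2) (Fin 2) ℝ))⁻¹.mulVec ![0,1]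
            ≤ 1 ^ 2 / 2 ∧
          ![1-ε, a*ε] ⬝ᵥ ((w 0 • vecMulVec ![1,0] ![1,0] + w 1 • vecMulVec ![0,1] ![0,1]
            + w 2 • vecMulVec ![1-ε, a*ε] ![1-ε, a*ε] : Matrix (Fin 2) (Fin 2) ℝ))⁻¹.mulVec ![1-ε, a*ε]
            ≤ ε ^ 2 / 2) ∧
        r = w 1 * 1 + w 2 * ε} := by
    intro t ht
    have ht0 : 0 < t := by nlinarith
    have htd : 0 < t - 2*a^2 := by linarith
    obtain ⟨T, hT0, hTprop⟩ : ∃ T : ℝ, 0 < T ∧ ε^2*(t - 2*a^2)*T = 4*t :=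
      ⟨4*t/(ε^2*(t - 2*a^2)), div_pos (by linarith) (mul_pos (by positivity) htd),
        by field_simp⟩
    refine ⟨![T, t, 0], ?_, ⟨?_, ?_, ?_⟩, ?_⟩
    · intro i; fin_cases i <;> simp <;> linarith
    · rw [hH a ε ![T, t, 0]]
      simp only [Matrix.cons_val_zero, Matrix.cons_val_one, Matrix.head_cons,
        Matrix.cons_val_two, Matrix.tail_cons]
      rw [det_fin_two_of]
      apply isUnit_iff_ne_zero.mpr
      nlinarith [mul_pos hT0 ht0]
    · rw [hH a ε ![T, t, 0], quad_form]
      simp only [Matrix.cons_val_zero, Matrix.cons_val_one, Matrix.head_cons,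
        Matrix.cons_val_two, Matrix.tail_cons]
      have hd : (0:ℝ) < (T + 0*(1-ε)^2) * (t + 0*(a*ε)^2) - 0*(1-ε)*(a*ε) * (0*(1-ε)*(a*ε)) := by
        nlinarith [mul_pos hT0 ht0]
      rw [div_le_iff₀ hd]
      nlinarith [mul_pos hT0 ht0, mul_pos hT0 htd]
    · rw [hH a ε ![T, t, 0], quad_form]
      simp only [Matrix.cons_val_zero, Matrix.cons_val_one, Matrix.head_cons,
        Matrix.cons_val_two, Matrix.tail_cons]
      have hd : (0:ℝ) < (T + 0*(1-ε)^2) * (t + 0*(a*ε)^2) - 0*(1-ε)*(a*ε) * (0*(1-ε)*(a*ε)) := by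
        nlinarith [mul_pos hT0 ht0]
      rw [div_le_iff₀ hd]
      nlinarith [hTprop, mul_pos ht0 hε, mul_pos ht0 (mul_pos hε hε), sq_nonneg (1-ε)]
    · simp
  have hne : Set.Nonempty {r : ℝ | ∃ w : Fin 3 → ℝ, (∀ i, 0 ≤ w i) ∧
        (IsUnit (w 0 • vecMulVec ![1,0] ![1,0] + w 1 • vecMulVec ![0,1] ![0,1]
            + w 2 • vecMulVec ![1-ε, a*ε] ![1-ε, a*ε] : Matrix (Fin 2) (Fin 2) ℝ).det ∧
          ![0,1] ⬝ᵥ ((w 0 • vecMulVec ![1,0] ![1,0] + w 1 • vecMulVec ![0,1] ![0,1]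
            + w 2 • vecMulVec ![1-ε, a*ε] ![1-ε, a*ε] : Matrix (Fin 2) (Fin 2) ℝ))⁻¹.mulVec ![0,1]
            ≤ 1 ^ 2 / 2 ∧
          ![1-ε, a*ε] ⬝ᵥ ((w 0 • vecMulVec ![1,0] ![1,0] + w 1 • vecMulVec ![0,1] ![0,1]
            + w 2 • vecMulVec ![1-ε, a*ε] ![1-ε, a*ε] : Matrix (Fin 2) (Fin 2) ℝ))⁻¹.mulVec ![1-ε, a*ε]
            ≤ ε ^ 2 / 2) ∧
        r = w 1 * 1 + w 2 * ε} := ⟨2*a^2 + 1, hmem _ (by linarith)⟩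
  -- lower bound
  have hlb : ∀ r ∈ {r : ℝ | ∃ w : Fin 3 → ℝ, (∀ i, 0 ≤ w i) ∧
        (IsUnit (w 0 • vecMulVec ![1,0] ![1,0] + w 1 • vecMulVec ![0,1] ![0,1]
            + w 2 • vecMulVec ![1-ε, a*ε] ![1-ε, a*ε] : Matrix (Fin 2) (Fin 2) ℝ).det ∧
          ![0,1] ⬝ᵥ ((w 0 • vecMulVec ![1,0] ![1,0] + w 1 • vecMulVec ![0,1] ![0,1]
            + w 2 • vecMulVec ![1-ε, a*ε] ![1-ε, a*ε] : Matrix (Fin 2) (Fin 2) ℝ))⁻¹.mulVec ![0,1]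
            ≤ 1 ^ 2 / 2 ∧
          ![1-ε, a*ε] ⬝ᵥ ((w 0 • vecMulVec ![1,0] ![1,0] + w 1 • vecMulVec ![0,1] ![0,1]
            + w 2 • vecMulVec ![1-ε, a*ε] ![1-ε, a*ε] : Matrix (Fin 2) (Fin 2) ℝ))⁻¹.mulVec ![1-ε, a*ε]
            ≤ ε ^ 2 / 2) ∧
        r = w 1 * 1 + w 2 * ε}, 2*a^2 ≤ r := by
    rintro r ⟨w, hw, ⟨hdet, -, h3⟩, rfl⟩
    rw [hH a ε w] at hdet h3
    rw [quad_form] at h3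
    rw [det_fin_two_of] at hdet
    have hd := isUnit_iff_ne_zero.mp hdet
    simp only [Matrix.cons_val_zero, Matrix.cons_val_one, Matrix.head_cons] at h3
    have hdnn : 0 ≤ (w 0 + w 2*(1-ε)^2) * (w 1 + w 2*(a*ε)^2)
        - (w 2*(1-ε)*(a*ε)) * (w 2*(1-ε)*(a*ε)) := by
      nlinarith [mul_nonneg (hw 0) (hw 1),
        mul_nonneg (mul_nonneg (hw 0) (hw 2)) (sq_nonneg (a*ε)),
        mul_nonneg (mul_nonneg (hw 1) (hw 2)) (sq_nonneg (1-ε))]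
    have hdpos : 0 < (w 0 + w 2*(1-ε)^2) * (w 1 + w 2*(a*ε)^2)
        - (w 2*(1-ε)*(a*ε)) * (w 2*(1-ε)*(a*ε)) := lt_of_le_of_ne hdnn (Ne.symm hd)
    have hN := (div_le_iff₀ hdpos).mp h3
    have hs : 0 ≤ w 1 + w 2*(a*ε)^2 := by
      have := mul_nonneg (hw 2) (sq_nonneg (a*ε)); linarith [hw 1]
    have hs2 : 2*a^2 ≤ w 1 + w 2*(a*ε)^2 := by
      apply cs_aux (w 0 + w 2*(1-ε)^2) (w 2*(1-ε)*(a*ε)) (w 1 + w 2*(a*ε)^2) _ ε a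
        rfl hdpos hs hε
      linarith [hN]
    have hw2e : 0 ≤ w 2 * ε * (1 - ε*a^2) :=
      mul_nonneg (mul_nonneg (hw 2) hε.le) (by linarith)
    have hfin : w 2*(a*ε)^2 ≤ w 2 * ε := by nlinarith [hw2e]
    linarith [hs2, hfin]
  apply le_antisymm
  · rw [Real.sInf_le_iff ⟨2*a^2, hlb⟩ hne]
    intro δ hδ
    exact ⟨2*a^2 + δ/2, hmem _ (by linarith), by linarith⟩
  · exact le_csInf hne hlb

/-- For the counter-example action set `{(1,0), (0,1), (1−ε, αε)}` with `θ = (1,0)` and `α > 1`,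
the optimal asymptotic constant `c(A, θ)` equals `2α²` for all sufficiently small `ε > 0`. -/
theorem stmt9 (a : ℝ) (ha : 1 < a) :
    ∃ ε₀ > 0, ∀ ε : ℝ, 0 < ε → ε < ε₀ →
      (let x₁ : Fin 2 → ℝ := ![1, 0]
       let x₂ : Fin 2 → ℝ := ![0, 1]
       let x₃ : Fin 2 → ℝ := ![1 - ε, a * ε]
       sInf {r : ℝ | ∃ w : Fin 3 → ℝ, (∀ i, 0 ≤ w i) ∧
          (let H := w 0 • vecMulVec x₁ x₁ + w 1 • vecMulVec x₂ x₂ + w 2 • vecMulVec x₃ x₃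
           IsUnit H.det ∧
           x₂ ⬝ᵥ H⁻¹.mulVec x₂ ≤ 1 ^ 2 / 2 ∧
           x₃ ⬝ᵥ H⁻¹.mulVec x₃ ≤ ε ^ 2 / 2) ∧
          r = w 1 * 1 + w 2 * ε} = 2 * a ^ 2) := by
  refine ⟨1 / a ^ 2, by positivity, fun ε hε hεa => ?_⟩
  exact key a ha ε hε hεa
end

section
/- If each element x_i of a barycentric spanner B = {x₁,…,x_d} has been played m times and G = m Σ_{i=1}^d x_i x_iᵀ is invertible, then for every x in the spanned set A, ‖x‖_{G⁻¹} ≤ d/√m. -/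
open Matrix Finset

/-- If each element of a barycentric spanner has been played `m` times, so that
`G = m Σ_i x_i x_iᵀ`, and `G` is invertible, then `‖x‖_{G⁻¹} ≤ d/√m` for all `x ∈ A`. -/
theorem stmt11 {d : ℕ} (A : Finset (Fin d → ℝ)) (b : Fin d → (Fin d → ℝ))
    (hbA : ∀ i, b i ∈ A)
    (hspanner : ∀ x ∈ A, ∃ c : Fin d → ℝ, (∀ i, |c i| ≤ 1) ∧ x = ∑ i, c i • b i)
    (m : ℕ) (hm : 0 < m)
    (G : Matrix (Fin d) (Fin d) ℝ) (hG : G = (m : ℝ) • ∑ i, vecMulVec (b i) (b i))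
    (hinv : IsUnit G.det) :
    ∀ x ∈ A, Real.sqrt (x ⬝ᵥ G⁻¹.mulVec x) ≤ d / Real.sqrt m := by
  have hm' : (0:ℝ) < m := by exact_mod_cast hm
  have sum_mv : ∀ (f : Fin d → Matrix (Fin d) (Fin d) ℝ) (w : Fin d → ℝ),
      (∑ i, f i) *ᵥ w = ∑ i, f i *ᵥ w := by
    intro f w
    ext j
    simp only [mulVec, dotProduct, Finset.sum_apply, Matrix.sum_apply, Finset.sum_mul]
    exact Finset.sum_comm
  -- quadratic form of G
  have quadG : ∀ w : Fin d → ℝ, w ⬝ᵥ (G *ᵥ w) = (m:ℝ) * ∑ i, (b i ⬝ᵥ w)^2 := by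
    intro w
    rw [hG, smul_mulVec, dotProduct_smul, smul_eq_mul]
    congr 1
    have dp_sum : ∀ g : Fin d → (Fin d → ℝ), w ⬝ᵥ (∑ i, g i) = ∑ i, w ⬝ᵥ g i := by
      intro g
      simp only [dotProduct, Finset.sum_apply, Finset.mul_sum]
      exact Finset.sum_comm
    rw [sum_mv, dp_sum]
    refine Finset.sum_congr rfl fun i _ => ?_
    simp only [dotProduct, mulVec, vecMulVec_apply, sq]
    rw [Finset.sum_mul_sum]
    refine Finset.sum_congr rfl fun j _ => ?_
    rw [Finset.mul_sum]
    exact Finset.sum_congr rfl fun k _ => by ring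
  -- G is positive semidefinite
  have hGpsd : G.PosSemidef := by
    refine Matrix.PosSemidef.of_dotProduct_mulVec_nonneg ?_ ?_
    · show Gᴴ = G
      ext j k
      simp [hG, conjTranspose_apply, Matrix.sum_apply, vecMulVec_apply, mul_comm]
    · intro x
      rw [star_trivial, quadG]
      positivity
  have hMpsd : (G⁻¹).PosSemidef := hGpsd.inv
  -- key bound on spanner elements
  have hkey : ∀ i, b i ⬝ᵥ (G⁻¹ *ᵥ b i) ≤ 1 / m := by
    intro i
    have hGw : G *ᵥ (G⁻¹ *ᵥ b i) = b i := by
      rw [mulVec_mulVec, mul_nonsing_inv G hinv, one_mulVec]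
    set w : Fin d → ℝ := G⁻¹ *ᵥ b i with hw
    set t : ℝ := b i ⬝ᵥ w with ht
    have ht0 : 0 ≤ t := by
      have := hMpsd.dotProduct_mulVec_nonneg (b i); rwa [star_trivial] at this
    have hquad : (m:ℝ) * ∑ j, (b j ⬝ᵥ w)^2 = t := by
      rw [← quadG, hGw, dotProduct_comm]
    have hterm : (m:ℝ) * t^2 ≤ t := by
      have h2 : t^2 ≤ ∑ j, (b j ⬝ᵥ w)^2 :=
        Finset.single_le_sum (f := fun j => (b j ⬝ᵥ w)^2)
          (fun j _ => sq_nonneg _) (Finset.mem_univ i)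
      nlinarith [h2, hquad, hm']
    show t ≤ 1 / (m:ℝ)
    rw [le_div_iff₀ hm']
    rcases ht0.eq_or_lt with h0 | h0
    · nlinarith
    · nlinarith [mul_pos h0 hm']
  -- square-root factorization
  set S : Matrix (Fin d) (Fin d) ℝ := open MatrixOrder in CFC.sqrt (G⁻¹) with hSdef
  have hSsq : S * S = G⁻¹ := by
    open MatrixOrder in (have := CFC.sq_sqrt (G⁻¹) hMpsd.nonneg; rwa [sq] at this)
  have hSherm : Sᵀ = S := by
    open MatrixOrder in exact (CFC.sqrt_nonneg (G⁻¹)).posSemidef.isHermitian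
  have hnorm : ∀ v : Fin d → ℝ, v ⬝ᵥ (G⁻¹ *ᵥ v) = (S *ᵥ v) ⬝ᵥ (S *ᵥ v) := by
    intro v
    rw [← hSsq, ← mulVec_mulVec, dotProduct_mulVec, ← mulVec_transpose, hSherm]
  -- Euclidean norm
  set E := (WithLp.linearEquiv 2 ℝ (Fin d → ℝ)).symm with hE
  set F : (Fin d → ℝ) → EuclideanSpace ℝ (Fin d) := fun v => E (S *ᵥ v) with hF
  have hFapp : ∀ (v : Fin d → ℝ) (i : Fin d), F v i = (S *ᵥ v) i := fun v i => rfl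
  have hFnorm : ∀ v : Fin d → ℝ, ‖F v‖ = Real.sqrt (v ⬝ᵥ (G⁻¹ *ᵥ v)) := by
    intro v
    rw [hnorm, EuclideanSpace.norm_eq]
    congr 1
    simp [dotProduct, hFapp, Real.norm_eq_abs, sq_abs, sq]
  intro x hx
  obtain ⟨c, hc, hxc⟩ := hspanner x hx
  have hFx : F x = ∑ i, c i • F (b i) := by
    rw [hF]
    simp only
    rw [hxc]
    have h1 : S *ᵥ (∑ i, c i • b i) = ∑ i, c i • (S *ᵥ b i) := by
      simp only [← Matrix.mulVecLin_apply, map_sum]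
      exact Finset.sum_congr rfl fun i _ => _root_.map_smul _ _ _
    rw [h1, map_sum]
    exact Finset.sum_congr rfl fun i _ => _root_.map_smul E (c i) (S *ᵥ b i)
  calc Real.sqrt (x ⬝ᵥ G⁻¹.mulVec x) = ‖F x‖ := (hFnorm x).symm
    _ = ‖∑ i, c i • F (b i)‖ := by rw [hFx]
    _ ≤ ∑ i, ‖c i • F (b i)‖ := norm_sum_le _ _
    _ ≤ ∑ _i : Fin d, Real.sqrt (1 / m) := by
        refine Finset.sum_le_sum fun i _ => ?_
        rw [norm_smul, Real.norm_eq_abs, hFnorm]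
        calc |c i| * Real.sqrt (b i ⬝ᵥ (G⁻¹ *ᵥ b i))
            ≤ 1 * Real.sqrt (b i ⬝ᵥ (G⁻¹ *ᵥ b i)) :=
              mul_le_mul_of_nonneg_right (hc i) (Real.sqrt_nonneg _)
          _ = Real.sqrt (b i ⬝ᵥ (G⁻¹ *ᵥ b i)) := one_mul _
          _ ≤ Real.sqrt (1 / m) := Real.sqrt_le_sqrt (hkey i)
    _ = d / Real.sqrt m := by
        rw [Finset.sum_const, card_univ, Fintype.card_fin, nsmul_eq_mul, one_div,
          Real.sqrt_inv, div_eq_mul_inv]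
end

section
/- Let T(Δ) be a solution of: minimize Σ_x T_x Δ_x over T ∈ [0,∞]^A subject to ‖x‖²_{H_T†} ≤ Δ_x²/f for all x ∈ A, where H_T = Σ_x T_x x xᵀ, f > 0, and A ⊂ ℝ^d spans ℝ^d with a unique optimal arm. Then Σ_{x: Δ_x>0} T_x ≤ 2 d³ f Δ_max / Δ_min³. -/
open Matrix Finset
open scoped ENNReal

/-- The squared confidence width `‖x‖²_{H_T†}` of `x` under the allocation `T`
(values in `[0,∞]`), expressed through the variational formula
`‖x‖²_{H_T†} = sup_v ⟨x,v⟩² / (Σ_y T_y ⟨y,v⟩²)` (with `a/0 = ∞` for `a ≠ 0`). -/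
noncomputable def width {d : ℕ} (A : Finset (Fin d → ℝ)) (T : (Fin d → ℝ) → ℝ≥0∞)
    (x : Fin d → ℝ) : ℝ≥0∞ :=
  ⨆ v : Fin d → ℝ,
    ENNReal.ofReal ((x ⬝ᵥ v) ^ 2) / ∑ y ∈ A, T y * ENNReal.ofReal ((y ⬝ᵥ v) ^ 2)

private lemma sum_smul_dot {d : ℕ} (c : Fin d → ℝ) (b : Fin d → (Fin d → ℝ)) (v : Fin d → ℝ) :
    (∑ i, c i • b i) ⬝ᵥ v = ∑ i, c i * (b i ⬝ᵥ v) := by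
  simp [dotProduct, Finset.sum_apply, Finset.sum_mul, Finset.mul_sum, mul_assoc]
  rw [Finset.sum_comm]

/-- Any solution `T` of the allocation problem (minimise `Σ_x T_x Δ_x` subject to
`‖x‖²_{H_T†} ≤ Δ_x²/f` for all `x`) satisfies `Σ_{Δ_x>0} T_x ≤ 2 d³ f Δ_max / Δ_min³`. -/
theorem stmt12 {d : ℕ} (A : Finset (Fin d → ℝ))
    (hspan : Submodule.span ℝ (A : Set (Fin d → ℝ)) = ⊤)
    (b : Fin d → (Fin d → ℝ)) (hbA : ∀ i, b i ∈ A)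
    (hspanner : ∀ x ∈ A, ∃ c : Fin d → ℝ, (∀ i, |c i| ≤ 1) ∧ x = ∑ i, c i • b i)
    (xstar : Fin d → ℝ) (hxstar : xstar ∈ A)
    (Δ : (Fin d → ℝ) → ℝ) (hΔstar : Δ xstar = 0)
    (Δmin Δmax : ℝ) (hΔmin : 0 < Δmin)
    (hgap : ∀ x ∈ A, x ≠ xstar → Δmin ≤ Δ x ∧ Δ x ≤ Δmax)
    (f : ℝ) (hf : 0 < f)
    (T : (Fin d → ℝ) → ℝ≥0∞)
    (hfeas : ∀ x ∈ A, width A T x ≤ ENNReal.ofReal (Δ x ^ 2 / f))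
    (hmin : ∀ S : (Fin d → ℝ) → ℝ≥0∞,
      (∀ x ∈ A, width A S x ≤ ENNReal.ofReal (Δ x ^ 2 / f)) →
      ∑ x ∈ A, T x * ENNReal.ofReal (Δ x) ≤ ∑ x ∈ A, S x * ENNReal.ofReal (Δ x)) :
    ∑ x ∈ A.filter (fun x => 0 < Δ x), T x ≤
      ENNReal.ofReal (2 * d ^ 3 * f * Δmax / Δmin ^ 3) := by
  classical
  rcases (A.filter (fun x => 0 < Δ x)).eq_empty_or_nonempty with hF | hF
  · simp [hF]
  obtain ⟨x₀, hx₀⟩ := hF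
  rw [Finset.mem_filter] at hx₀
  have hx0ne : x₀ ≠ xstar := by
    intro h; rw [h, hΔstar] at hx₀; exact lt_irrefl 0 hx₀.2
  have hd : 0 < d := by
    by_contra h
    push_neg at h
    interval_cases d
    exact hx0ne (Subsingleton.elim _ _)
  have hΔmax : Δmin ≤ Δmax := le_trans (hgap x₀ hx₀.1 hx0ne).1 (hgap x₀ hx₀.1 hx0ne).2
  have hΔmaxpos : 0 < Δmax := lt_of_lt_of_le hΔmin hΔmax
  set I : Finset (Fin d → ℝ) := Finset.image b Finset.univ with hI
  have hIA : I ⊆ A := by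
    intro y hy
    rw [hI, Finset.mem_image] at hy
    obtain ⟨i, _, rfl⟩ := hy
    exact hbA i
  set c : ℝ := 2 * d ^ 2 * f / Δmin ^ 2 with hc
  have hcpos : 0 < c := by
    rw [hc]; positivity
  set S : (Fin d → ℝ) → ℝ≥0∞ :=
    fun y => if y = xstar then ⊤ else if y ∈ I then ENNReal.ofReal c else 0 with hS
  -- feasibility of S
  have hSfeas : ∀ x ∈ A, width A S x ≤ ENNReal.ofReal (Δ x ^ 2 / f) := by
    intro x hx
    rw [width]
    apply iSup_le
    intro v
    by_cases hxst : x = xstar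
    · subst hxst
      by_cases hxv : x ⬝ᵥ v = 0
      · simp [hxv]
      · have hterm : S x * ENNReal.ofReal ((x ⬝ᵥ v) ^ 2) = ⊤ := by
          have h1 : S x = ⊤ := by simp [hS]
          have h2 : ENNReal.ofReal ((x ⬝ᵥ v) ^ 2) ≠ 0 := by
            simp only [ne_eq, ENNReal.ofReal_eq_zero, not_le]
            positivity
          rw [h1, ENNReal.top_mul h2]
        have hden : (∑ y ∈ A, S y * ENNReal.ofReal ((y ⬝ᵥ v) ^ 2)) = ⊤ := by
          rw [eq_top_iff, ← hterm]
          exact Finset.single_le_sum (f := fun y => S y * ENNReal.ofReal ((y ⬝ᵥ v) ^ 2))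
            (fun y _ => zero_le) hx
        rw [hden, ENNReal.div_top]
        exact zero_le
    · obtain ⟨co, hco, hxeq⟩ := hspanner x hx
      have hΔx : Δmin ≤ Δ x := (hgap x hx hxst).1
      set B : ℝ≥0∞ := ∑ y ∈ I, ENNReal.ofReal ((y ⬝ᵥ v) ^ 2) with hB
      -- numerator bound (real version)
      have hxv : x ⬝ᵥ v = ∑ i, co i * (b i ⬝ᵥ v) := by rw [hxeq]; exact sum_smul_dot co b v
      have hnumR : (x ⬝ᵥ v) ^ 2 ≤ (d : ℝ) ^ 2 * ∑ y ∈ I, (y ⬝ᵥ v) ^ 2 := by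
        have h1 : (x ⬝ᵥ v) ^ 2 ≤ (∑ i, |b i ⬝ᵥ v|) ^ 2 := by
          rw [hxv]
          have habs : |∑ i, co i * (b i ⬝ᵥ v)| ≤ ∑ i, |b i ⬝ᵥ v| := by
            refine le_trans (Finset.abs_sum_le_sum_abs _ _) ?_
            apply Finset.sum_le_sum
            intro i _
            rw [abs_mul]
            calc |co i| * |b i ⬝ᵥ v| ≤ 1 * |b i ⬝ᵥ v| :=
                  mul_le_mul_of_nonneg_right (hco i) (abs_nonneg _)
              _ = |b i ⬝ᵥ v| := one_mul _
          calc (∑ i, co i * (b i ⬝ᵥ v)) ^ 2 = |∑ i, co i * (b i ⬝ᵥ v)| ^ 2 := (sq_abs _).symm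
            _ ≤ (∑ i, |b i ⬝ᵥ v|) ^ 2 := by
                apply pow_le_pow_left₀ (abs_nonneg _) habs
        have h2 : (∑ i, |b i ⬝ᵥ v|) ^ 2 ≤ (d : ℝ) * ∑ i, |b i ⬝ᵥ v| ^ 2 := by
          have := sq_sum_le_card_mul_sum_sq (s := (Finset.univ : Finset (Fin d)))
            (f := fun i => |b i ⬝ᵥ v|)
          simpa using this
        have h3 : ∑ i, |b i ⬝ᵥ v| ^ 2 ≤ (d : ℝ) * ∑ y ∈ I, (y ⬝ᵥ v) ^ 2 := by
          have hsum : ∀ i : Fin d, |b i ⬝ᵥ v| ^ 2 ≤ ∑ y ∈ I, (y ⬝ᵥ v) ^ 2 := by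
            intro i
            rw [sq_abs]
            exact Finset.single_le_sum (f := fun y => (y ⬝ᵥ v) ^ 2)
              (fun y _ => sq_nonneg _) (by rw [hI]; exact Finset.mem_image_of_mem b (Finset.mem_univ i))
          calc ∑ i, |b i ⬝ᵥ v| ^ 2 ≤ ∑ _i : Fin d, ∑ y ∈ I, (y ⬝ᵥ v) ^ 2 :=
                Finset.sum_le_sum (fun i _ => hsum i)
            _ = (d : ℝ) * ∑ y ∈ I, (y ⬝ᵥ v) ^ 2 := by
                rw [Finset.sum_const, Finset.card_univ, Fintype.card_fin, nsmul_eq_mul]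
        calc (x ⬝ᵥ v) ^ 2 ≤ (∑ i, |b i ⬝ᵥ v|) ^ 2 := h1
          _ ≤ (d : ℝ) * ∑ i, |b i ⬝ᵥ v| ^ 2 := h2
          _ ≤ (d : ℝ) * ((d : ℝ) * ∑ y ∈ I, (y ⬝ᵥ v) ^ 2) :=
              mul_le_mul_of_nonneg_left h3 (Nat.cast_nonneg d)
          _ = (d : ℝ) ^ 2 * ∑ y ∈ I, (y ⬝ᵥ v) ^ 2 := by ring
      by_cases hBz : B = 0
      · -- all b i ⬝ᵥ v = 0 hence x ⬝ᵥ v = 0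
        have hnum0 : (x ⬝ᵥ v) ^ 2 ≤ 0 := by
          refine le_trans hnumR ?_
          have hIz : ∑ y ∈ I, (y ⬝ᵥ v) ^ 2 = 0 := by
            rw [hB] at hBz
            have := (Finset.sum_eq_zero_iff).mp hBz
            apply Finset.sum_eq_zero
            intro y hy
            have := this y hy
            rw [ENNReal.ofReal_eq_zero] at this
            exact le_antisymm this (sq_nonneg _)
          rw [hIz, mul_zero]
        have : ENNReal.ofReal ((x ⬝ᵥ v) ^ 2) = 0 := by
          rw [ENNReal.ofReal_eq_zero]; exact hnum0
        rw [this, ENNReal.zero_div]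
        exact zero_le
      · have hBtop : B ≠ ⊤ := by
          rw [hB]
          exact (ENNReal.sum_lt_top.mpr (fun y _ => ENNReal.ofReal_lt_top)).ne
        have hnum : ENNReal.ofReal ((x ⬝ᵥ v) ^ 2) ≤ ENNReal.ofReal ((d : ℝ) ^ 2) * B := by
          refine le_trans (ENNReal.ofReal_le_ofReal hnumR) ?_
          rw [ENNReal.ofReal_mul (by positivity), hB,
            ENNReal.ofReal_sum_of_nonneg (fun y _ => sq_nonneg _)]
        have hden : ENNReal.ofReal c * B ≤ ∑ y ∈ A, S y * ENNReal.ofReal ((y ⬝ᵥ v) ^ 2) := by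
          rw [hB, Finset.mul_sum]
          calc ∑ y ∈ I, ENNReal.ofReal c * ENNReal.ofReal ((y ⬝ᵥ v) ^ 2)
              ≤ ∑ y ∈ I, S y * ENNReal.ofReal ((y ⬝ᵥ v) ^ 2) := by
                apply Finset.sum_le_sum
                intro y hy
                apply mul_le_mul_left
                rw [hS]
                by_cases hyx : y = xstar
                · simp [hyx]
                · simp [hyx, hy]
            _ ≤ ∑ y ∈ A, S y * ENNReal.ofReal ((y ⬝ᵥ v) ^ 2) :=
                Finset.sum_le_sum_of_subset hIA
        calc ENNReal.ofReal ((x ⬝ᵥ v) ^ 2) / ∑ y ∈ A, S y * ENNReal.ofReal ((y ⬝ᵥ v) ^ 2)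
            ≤ (ENNReal.ofReal ((d : ℝ) ^ 2) * B) / (ENNReal.ofReal c * B) :=
              ENNReal.div_le_div hnum hden
          _ = ENNReal.ofReal ((d : ℝ) ^ 2) / ENNReal.ofReal c :=
              ENNReal.mul_div_mul_right _ _ hBz hBtop
          _ = ENNReal.ofReal ((d : ℝ) ^ 2 / c) := (ENNReal.ofReal_div_of_pos hcpos).symm
          _ ≤ ENNReal.ofReal (Δ x ^ 2 / f) := by
              apply ENNReal.ofReal_le_ofReal
              have hdc : (d : ℝ) ^ 2 / c = Δmin ^ 2 / (2 * f) := by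
                rw [hc]
                have hd' : (0 : ℝ) < (d : ℝ) ^ 2 := by positivity
                field_simp
              rw [hdc]
              have h1 : Δmin ^ 2 / (2 * f) ≤ Δmin ^ 2 / f := by
                apply div_le_div_of_nonneg_left (by positivity) hf
                linarith
              have h2 : Δmin ^ 2 / f ≤ Δ x ^ 2 / f := by
                gcongr
              linarith
  -- cost of S
  have hcost : ∑ y ∈ A, S y * ENNReal.ofReal (Δ y) ≤
      (d : ℝ≥0∞) * (ENNReal.ofReal c * ENNReal.ofReal Δmax) := by
    have hterm : ∀ y ∈ A, S y * ENNReal.ofReal (Δ y) ≤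
        (if y ∈ I then ENNReal.ofReal c * ENNReal.ofReal Δmax else 0) := by
      intro y hy
      by_cases hyx : y = xstar
      · simp [hS, hyx, hΔstar]
      · rw [hS]
        simp only [hyx, if_false]
        by_cases hyI : y ∈ I
        · simp only [hyI, if_true]
          exact mul_le_mul_right (ENNReal.ofReal_le_ofReal (hgap y hy hyx).2) _
        · simp [hyI]
    calc ∑ y ∈ A, S y * ENNReal.ofReal (Δ y)
        ≤ ∑ y ∈ A, (if y ∈ I then ENNReal.ofReal c * ENNReal.ofReal Δmax else 0) :=
          Finset.sum_le_sum hterm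
      _ = ∑ y ∈ A ∩ I, ENNReal.ofReal c * ENNReal.ofReal Δmax := Finset.sum_ite_mem A I _
      _ = ((A ∩ I).card : ℝ≥0∞) * (ENNReal.ofReal c * ENNReal.ofReal Δmax) := by
          rw [Finset.sum_const, nsmul_eq_mul]
      _ ≤ (d : ℝ≥0∞) * (ENNReal.ofReal c * ENNReal.ofReal Δmax) := by
          apply mul_le_mul_left
          have hcard : (A ∩ I).card ≤ d := by
            calc (A ∩ I).card ≤ I.card := Finset.card_le_card (Finset.inter_subset_right)
              _ ≤ (Finset.univ : Finset (Fin d)).card := by rw [hI]; exact Finset.card_image_le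
              _ = d := by rw [Finset.card_univ, Fintype.card_fin]
          exact_mod_cast Nat.cast_le.mpr hcard
  -- lower bound on cost of T
  have hlow : ENNReal.ofReal Δmin * ∑ x ∈ A.filter (fun x => 0 < Δ x), T x ≤
      ∑ x ∈ A, T x * ENNReal.ofReal (Δ x) := by
    rw [Finset.mul_sum]
    calc ∑ x ∈ A.filter (fun x => 0 < Δ x), ENNReal.ofReal Δmin * T x
        ≤ ∑ x ∈ A.filter (fun x => 0 < Δ x), T x * ENNReal.ofReal (Δ x) := by
          apply Finset.sum_le_sum
          intro x hx
          rw [Finset.mem_filter] at hx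
          have hxne : x ≠ xstar := by
            intro h; rw [h, hΔstar] at hx; exact lt_irrefl 0 hx.2
          rw [mul_comm]
          exact mul_le_mul_right (ENNReal.ofReal_le_ofReal (hgap x hx.1 hxne).1) _
      _ ≤ ∑ x ∈ A, T x * ENNReal.ofReal (Δ x) :=
          Finset.sum_le_sum_of_subset (Finset.filter_subset _ _)
  have hchain : ENNReal.ofReal Δmin * ∑ x ∈ A.filter (fun x => 0 < Δ x), T x ≤
      (d : ℝ≥0∞) * (ENNReal.ofReal c * ENNReal.ofReal Δmax) :=
    le_trans hlow (le_trans (hmin S hSfeas) hcost)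
  have hΔminne : ENNReal.ofReal Δmin ≠ 0 := by
    simp only [ne_eq, ENNReal.ofReal_eq_zero, not_le]; exact hΔmin
  have hfin : ∑ x ∈ A.filter (fun x => 0 < Δ x), T x ≤
      (d : ℝ≥0∞) * (ENNReal.ofReal c * ENNReal.ofReal Δmax) / ENNReal.ofReal Δmin := by
    rw [ENNReal.le_div_iff_mul_le (Or.inl hΔminne) (Or.inl ENNReal.ofReal_ne_top)]
    rw [mul_comm]
    exact hchain
  refine le_trans hfin (le_of_eq ?_)
  have hdcast : (d : ℝ≥0∞) = ENNReal.ofReal (d : ℝ) := by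
    rw [ENNReal.ofReal_natCast]
  rw [hdcast, ← ENNReal.ofReal_mul (by positivity), ← ENNReal.ofReal_mul (by positivity),
    ← ENNReal.ofReal_div_of_pos hΔmin]
  congr 1
  rw [hc]
  have hΔ' : Δmin ≠ 0 := ne_of_gt hΔmin
  field_simp
end

section
/- For the candidate allocation S with S_x = 2d²f/Δ_min² for each element x of a barycentric spanner B and S_{x*} = ∞ (optimal arm given infinite weight, equivalently the constraint for x* is vacuous), the matrix H_S = Σ_{x∈B} S_x x xᵀ satisfies ‖y‖²_{H_S⁻¹} ≤ Δ_min²/(2f) ≤ Δ_y²/(2f) for every suboptimal y ∈ A. -/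
open Matrix Finset

/-- The candidate allocation putting weight `2d²f/Δ_min²` on each element of a barycentric
spanner yields `H_S` with `‖y‖²_{H_S⁻¹} ≤ Δ_min²/(2f) ≤ Δ_y²/(2f)` for every suboptimal `y`. -/
theorem stmt13 {d : ℕ} (A : Finset (Fin d → ℝ)) (b : Fin d → (Fin d → ℝ))
    (hbA : ∀ i, b i ∈ A)
    (hspanner : ∀ x ∈ A, ∃ c : Fin d → ℝ, (∀ i, |c i| ≤ 1) ∧ x = ∑ i, c i • b i)
    (hspan : Submodule.span ℝ (Set.range b) = ⊤)
    (f Δmin : ℝ) (hf : 0 < f) (hΔmin : 0 < Δmin)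
    (Δ : (Fin d → ℝ) → ℝ)
    (H : Matrix (Fin d) (Fin d) ℝ)
    (hH : H = ∑ i, (2 * d ^ 2 * f / Δmin ^ 2) • vecMulVec (b i) (b i)) :
    ∀ y ∈ A, Δmin ≤ Δ y →
      y ⬝ᵥ H⁻¹.mulVec y ≤ Δmin ^ 2 / (2 * f) ∧
      Δmin ^ 2 / (2 * f) ≤ Δ y ^ 2 / (2 * f) := by
  intro y hy hΔy
  refine ⟨?_, (div_le_div_iff_of_pos_right (by positivity)).2 (pow_le_pow_left₀ hΔmin.le hΔy 2)⟩
  rcases Nat.eq_zero_or_pos d with hd | hd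
  · subst hd
    simp only [dotProduct, Finset.univ_eq_empty, Finset.sum_empty]
    positivity
  have hd1 : (1 : ℝ) ≤ (d : ℝ) := by exact_mod_cast hd
  set α : ℝ := 2 * d ^ 2 * f / Δmin ^ 2 with hαdef
  have hα : 0 < α := by positivity
  set B : Matrix (Fin d) (Fin d) ℝ := Matrix.of b with hBdef
  -- B is invertible since its rows span ℝ^d
  have hBu : IsUnit B := by
    rw [← Matrix.vecMul_surjective_iff_isUnit]
    intro v
    obtain ⟨c, hc⟩ := (Submodule.mem_span_range_iff_exists_fun ℝ).1
      (hspan ▸ Submodule.mem_top : v ∈ Submodule.span ℝ (Set.range b))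
    exact ⟨c, funext fun j => by
      simpa [Matrix.vecMul, dotProduct, Finset.sum_apply, hBdef] using congrFun hc j⟩
  have hBd : IsUnit B.det := (Matrix.isUnit_iff_isUnit_det B).1 hBu
  have hBtd : IsUnit Bᵀ.det := by rwa [Matrix.det_transpose]
  -- H = α • (Bᵀ * B)
  have hG : Bᵀ * B = ∑ i, vecMulVec (b i) (b i) := by
    ext j k
    simp [Matrix.mul_apply, Matrix.vecMulVec_apply, Matrix.transpose_apply,
      Matrix.sum_apply, hBdef]
  have hH2 : H = α • (Bᵀ * B) := by
    rw [hH, hG, Finset.smul_sum]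
  -- invert
  haveI : Invertible α := invertibleOfNonzero hα.ne'
  have hGd : IsUnit (Bᵀ * B).det := by
    rw [Matrix.det_mul]; exact hBtd.mul hBd
  have hHinv : H⁻¹ = α⁻¹ • (B⁻¹ * Bᵀ⁻¹) := by
    refine Matrix.inv_eq_right_inv ?_
    rw [hH2, Matrix.smul_mul, Matrix.mul_smul, smul_smul, mul_inv_cancel₀ hα.ne', one_smul,
      mul_assoc, ← mul_assoc B, Matrix.mul_nonsing_inv _ hBd, one_mul,
      Matrix.mul_nonsing_inv _ hBtd]
  obtain ⟨c, hc1, hc2⟩ := hspanner y hy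
  have hyc : y = Bᵀ *ᵥ c := by
    funext j
    rw [hc2]
    simp [Matrix.mulVec, dotProduct, Matrix.transpose_apply, Finset.sum_apply,
      hBdef, mul_comm]
  have key : y ⬝ᵥ H⁻¹.mulVec y = α⁻¹ * (c ⬝ᵥ c) := by
    rw [hHinv, hyc, Matrix.smul_mulVec, dotProduct_smul, smul_eq_mul,
      Matrix.mulVec_mulVec, mul_assoc, Matrix.nonsing_inv_mul _ hBtd, mul_one,
      Matrix.mulVec_transpose, ← dotProduct_mulVec, Matrix.mulVec_mulVec,
      Matrix.mul_nonsing_inv _ hBd, Matrix.one_mulVec]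
  have hcc : c ⬝ᵥ c ≤ (d : ℝ) := by
    have : c ⬝ᵥ c ≤ ∑ _i : Fin d, (1 : ℝ) := by
      apply Finset.sum_le_sum
      intro i _
      calc c i * c i = |c i| * |c i| := by rw [← abs_mul, abs_mul_self]
        _ ≤ 1 * 1 := by
            apply mul_le_mul (hc1 i) (hc1 i) (abs_nonneg _) zero_le_one
        _ = 1 := one_mul 1
    simpa using this
  rw [key]
  have hcc0 : 0 ≤ c ⬝ᵥ c := Finset.sum_nonneg fun i _ => mul_self_nonneg _
  calc α⁻¹ * (c ⬝ᵥ c) ≤ α⁻¹ * d := by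
        apply mul_le_mul_of_nonneg_left hcc (by positivity)
    _ ≤ Δmin ^ 2 / (2 * f) := by
        rw [hαdef, ← one_div, one_div_div, div_mul_eq_mul_div,
          div_le_div_iff₀ (by positivity) (by positivity)]
        nlinarith [mul_nonneg (mul_nonneg (sq_nonneg Δmin) hf.le)
          (mul_nonneg (by linarith : (0:ℝ) ≤ (d:ℝ)) (by linarith : (0:ℝ) ≤ (d:ℝ) - 1))]
end

section
/- Consider a consistent policy for linear bandits (regret R_θ(n) = o(n^p) for all θ and p > 0). If E[T_x(n)] = O(n^p) for every suboptimal x and every p > 0, and E[T_*(n)] = Ω(n), then for every vector y ∈ ℝ^d orthogonal to the unique optimal arm x*, log(n) · yᵀ Ḡ_n⁻¹ x* → 0 as n → ∞, where Ḡ_n = E[Σ_{t≤n} A_t A_tᵀ] (assumed invertible for large n). -/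
open Matrix Finset Filter


noncomputable section
namespace Stmt16Aux

variable {d k : ℕ}

def Gm (a : Fin k → Fin d → ℝ) (t : Fin k → ℝ) : Matrix (Fin d) (Fin d) ℝ :=
  ∑ i, t i • vecMulVec (a i) (a i)

def Mf (a : Fin k → Fin d → ℝ) (y : Fin d → ℝ) (f : Fin d → Option (Fin k)) :
    Matrix (Fin d) (Fin d) ℝ :=
  Matrix.of fun j => (f j).elim y a

def coef (a : Fin k → Fin d → ℝ) (u : Fin d → ℝ) (t : Fin k → ℝ)
    (f : Fin d → Option (Fin k)) (j : Fin d) : ℝ :=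
  (f j).elim (u j) fun i => t i * a i j

def Phi (a : Fin k → Fin d → ℝ) (y u : Fin d → ℝ) (t : Fin k → ℝ)
    (f : Fin d → Option (Fin k)) : ℝ :=
  (∏ j, coef a u t f j) * (Mf a y f).det

def armset (f : Fin d → Option (Fin k)) : Finset (Fin k) :=
  univ.filter fun i => ∃ j, f j = some i

lemma dot_sum_smul (c : Fin k → ℝ) (vs : Fin k → Fin d → ℝ) (v : Fin d → ℝ) :
    v ⬝ᵥ (∑ i, c i • vs i) = ∑ i, c i * (vs i ⬝ᵥ v) := by
  simp only [dotProduct, Finset.sum_apply, Pi.smul_apply, smul_eq_mul, Finset.mul_sum,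
    Finset.sum_mul]
  rw [Finset.sum_comm]
  exact Finset.sum_congr rfl fun i _ => Finset.sum_congr rfl fun j _ => by ring

lemma Gm_apply (a : Fin k → Fin d → ℝ) (t : Fin k → ℝ) (j j' : Fin d) :
    Gm a t j j' = ∑ i, t i * (a i j * a i j') := by
  simp [Gm, Matrix.sum_apply, vecMulVec_apply, mul_assoc]

lemma Gm_transpose (a : Fin k → Fin d → ℝ) (t : Fin k → ℝ) : (Gm a t)ᵀ = Gm a t := by
  ext j j'
  simp only [Matrix.transpose_apply, Gm_apply]
  exact Finset.sum_congr rfl fun i _ => by ring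

lemma Gm_mulVec (a : Fin k → Fin d → ℝ) (t : Fin k → ℝ) (v : Fin d → ℝ) :
    Gm a t *ᵥ v = ∑ i, (t i * (a i ⬝ᵥ v)) • a i := by
  ext j
  simp only [Matrix.mulVec, dotProduct, Gm_apply, Finset.sum_apply, Pi.smul_apply,
    smul_eq_mul, Finset.sum_mul, Finset.mul_sum]
  rw [Finset.sum_comm]
  exact Finset.sum_congr rfl fun i _ => Finset.sum_congr rfl fun j' _ => by ring

lemma vecMul_Gm (a : Fin k → Fin d → ℝ) (t : Fin k → ℝ) (v : Fin d → ℝ) :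
    v ᵥ* Gm a t = ∑ i, (t i * (a i ⬝ᵥ v)) • a i := by
  rw [← Gm_transpose a t, Matrix.vecMul_transpose, Gm_mulVec]

lemma dot_Gm (a : Fin k → Fin d → ℝ) (t : Fin k → ℝ) (v w : Fin d → ℝ) :
    v ⬝ᵥ (Gm a t *ᵥ w) = ∑ i, t i * ((a i ⬝ᵥ w) * (a i ⬝ᵥ v)) := by
  rw [Gm_mulVec, dot_sum_smul]
  exact Finset.sum_congr rfl fun i _ => by ring

lemma vecMul_vecMulVec (v u w : Fin d → ℝ) : v ᵥ* vecMulVec u w = (v ⬝ᵥ u) • w := by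
  ext j
  simp only [Matrix.vecMul, dotProduct, vecMulVec_apply, Pi.smul_apply, smul_eq_mul,
    Finset.sum_mul]
  exact Finset.sum_congr rfl fun i _ => by ring

lemma mul_vecMulVec (A : Matrix (Fin d) (Fin d) ℝ) (u w : Fin d → ℝ) :
    A * vecMulVec u w = vecMulVec (A *ᵥ u) w := by
  ext i j
  simp only [Matrix.mul_apply, vecMulVec_apply, Matrix.mulVec, dotProduct, Finset.sum_mul]
  exact Finset.sum_congr rfl fun l _ => by ring

lemma det_expand (a : Fin k → Fin d → ℝ) (y u : Fin d → ℝ) (t : Fin k → ℝ) :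
    (Gm a t + vecMulVec u y).det = ∑ f : Fin d → Option (Fin k), Phi a y u t f := by
  classical
  have hrow : (Gm a t + vecMulVec u y) = Matrix.of fun j =>
      ∑ o : Option (Fin k), o.elim (u j • y) (fun i => (t i * a i j) • a i) := by
    ext j j'
    simp only [Matrix.add_apply, Gm_apply, vecMulVec_apply, Matrix.of_apply,
      Fintype.sum_option, Finset.sum_apply, Option.elim, Pi.add_apply, Pi.smul_apply,
      smul_eq_mul]
    rw [add_comm]
    congr 1
    exact Finset.sum_congr rfl fun i _ => by ring
  rw [hrow]
  have expand := detRowAlternating.toMultilinearMap.map_sum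
    (g := fun (j : Fin d) (o : Option (Fin k)) =>
      o.elim (u j • y) (fun i => (t i * a i j) • a i))
  simp only [AlternatingMap.coe_multilinearMap] at expand
  show detRowAlternating (fun j =>
      ∑ o : Option (Fin k), o.elim (u j • y) (fun i => (t i * a i j) • a i)) = _
  rw [expand]
  refine Finset.sum_congr rfl fun f _ => ?_
  have hfj : (fun j => (f j).elim (u j • y) (fun i => (t i * a i j) • a i))
      = fun j => coef a u t f j • ((f j).elim y a : Fin d → ℝ) := by
    funext j
    cases hj : f j <;> simp [coef, hj]
  rw [hfj]
  have hsm := detRowAlternating.toMultilinearMap.map_smul_univ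
    (fun j => coef a u t f j) (fun j => ((f j).elim y a : Fin d → ℝ))
  simp only [AlternatingMap.coe_multilinearMap] at hsm
  rw [hsm, smul_eq_mul]
  rfl

lemma phi_cases (a : Fin k → Fin d → ℝ) (y : Fin d → ℝ) (f : Fin d → Option (Fin k)) :
    (Mf a y f).det = 0 ∨ (∀ j1 j2, f j1 ≠ none → f j1 = f j2 → j1 = j2) := by
  by_cases hinj : ∀ j1 j2, f j1 ≠ none → f j1 = f j2 → j1 = j2
  · exact Or.inr hinj
  push_neg at hinj
  obtain ⟨j1, j2, _, heq, hne⟩ := hinj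
  refine Or.inl (Matrix.det_zero_of_row_eq hne ?_)
  show (f j1).elim y a = (f j2).elim y a
  rw [heq]

lemma prod_elim_one (f : Fin d → Option (Fin k))
    (hinj : ∀ j1 j2, f j1 ≠ none → f j1 = f j2 → j1 = j2) (t : Fin k → ℝ) :
    ∏ j, ((f j).elim 1 t) = ∏ i ∈ armset f, t i := by
  classical
  rw [← Finset.prod_filter_mul_prod_filter_not univ (fun j => f j ≠ none)]
  have h2 : ∏ j ∈ univ.filter (fun j => ¬ f j ≠ none), ((f j).elim 1 t) = 1 := by
    refine Finset.prod_eq_one fun j hj => ?_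
    have := (Finset.mem_filter.mp hj).2
    rw [not_ne_iff] at this
    simp [this]
  rw [h2, mul_one]
  refine Finset.prod_bij (fun j hj => (f j).get (by
    rw [Option.isSome_iff_ne_none]; exact (Finset.mem_filter.mp hj).2)) ?_ ?_ ?_ ?_
  · intro j hj
    simp only [armset, Finset.mem_filter, Finset.mem_univ, true_and]
    exact ⟨j, (Option.some_get _).symm⟩
  · intro j1 h1 j2 h2 hg
    refine hinj j1 j2 (Finset.mem_filter.mp h1).2 ?_
    have hsome := congrArg some hg
    simpa only [Option.some_get] using hsome
  · intro i hi
    simp only [armset, Finset.mem_filter, Finset.mem_univ, true_and] at hi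
    obtain ⟨j, hj⟩ := hi
    refine ⟨j, Finset.mem_filter.mpr ⟨Finset.mem_univ _, by simp [hj]⟩, ?_⟩
    simp [hj]
  · intro j hj
    obtain ⟨i, hi⟩ := Option.isSome_iff_exists.mp
      (Option.isSome_iff_ne_none.mpr (Finset.mem_filter.mp hj).2)
    simp [hi]

lemma card_armset (f : Fin d → Option (Fin k))
    (hinj : ∀ j1 j2, f j1 ≠ none → f j1 = f j2 → j1 = j2) :
    (armset f).card = (univ.filter (fun j => f j ≠ none)).card := by
  classical
  refine (Finset.card_bij (fun j hj => (f j).get (by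
    rw [Option.isSome_iff_ne_none]; exact (Finset.mem_filter.mp hj).2)) ?_ ?_ ?_).symm
  · intro j hj
    simp only [armset, Finset.mem_filter, Finset.mem_univ, true_and]
    exact ⟨j, (Option.some_get _).symm⟩
  · intro j1 h1 j2 h2 hg
    refine hinj j1 j2 (Finset.mem_filter.mp h1).2 ?_
    have hsome := congrArg some hg
    simpa only [Option.some_get] using hsome
  · intro i hi
    simp only [armset, Finset.mem_filter, Finset.mem_univ, true_and] at hi
    obtain ⟨j, hj⟩ := hi
    refine ⟨j, Finset.mem_filter.mpr ⟨Finset.mem_univ _, by simp [hj]⟩, ?_⟩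
    simp [hj]



lemma coef_split (a : Fin k → Fin d → ℝ) (u : Fin d → ℝ) (t : Fin k → ℝ)
    (f : Fin d → Option (Fin k)) (j : Fin d) :
    coef a u t f j = (f j).elim 1 t * (f j).elim (u j) (fun i => a i j) := by
  cases hj : f j <;> simp [coef, hj]

lemma phi_mono (a : Fin k → Fin d → ℝ) (y u : Fin d → ℝ) (t : Fin k → ℝ)
    (f : Fin d → Option (Fin k)) :
    Phi a y u t f = (∏ i ∈ armset f, t i) * Phi a y u 1 f := by
  rcases phi_cases a y f with hdet | hinj
  · simp [Phi, hdet]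
  · have h : ∀ t' : Fin k → ℝ, ∏ j, coef a u t' f j
        = (∏ i ∈ armset f, t' i) * ∏ j, (f j).elim (u j) (fun i => a i j) := by
      intro t'
      rw [Finset.prod_congr rfl fun j _ => coef_split a u t' f j, Finset.prod_mul_distrib,
        prod_elim_one f hinj t']
    simp only [Phi, h, Pi.one_apply, Finset.prod_const_one, one_mul]
    ring

lemma phi_zero_of_none (a : Fin k → Fin d → ℝ) (y : Fin d → ℝ) (t : Fin k → ℝ)
    (f : Fin d → Option (Fin k)) (j0 : Fin d) (hj0 : f j0 = none) :
    Phi a y 0 t f = 0 := by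
  simp only [Phi, mul_eq_zero]
  left
  exact Finset.prod_eq_zero (Finset.mem_univ j0) (by simp [coef, hj0])

lemma phi_eq_of_allsome (a : Fin k → Fin d → ℝ) (y u : Fin d → ℝ) (t : Fin k → ℝ)
    (f : Fin d → Option (Fin k)) (hall : ∀ j, f j ≠ none) :
    Phi a y u t f = Phi a y 0 t f := by
  simp only [Phi]
  congr 1
  refine Finset.prod_congr rfl fun j _ => ?_
  obtain ⟨i, hi⟩ := Option.isSome_iff_exists.mp (Option.isSome_iff_ne_none.mpr (hall j))
  simp [coef, hi]


def ind (S : Finset (Fin k)) : Fin k → ℝ := fun i => if i ∈ S then 1 else 0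

lemma ind_nonneg (S : Finset (Fin k)) (i : Fin k) : 0 ≤ ind S i := by
  unfold ind; split <;> norm_num

lemma prod_ind (S T : Finset (Fin k)) :
    (∏ i ∈ T, ind S i) = if T ⊆ S then 1 else 0 := by
  split_ifs with h
  · exact Finset.prod_eq_one fun i hi => if_pos (h hi)
  · obtain ⟨i, hiT, hiS⟩ := Finset.not_subset.mp h
    exact Finset.prod_eq_zero hiT (if_neg hiS)

def nS (a : Fin k → Fin d → ℝ) (opt : Fin k) (y : Fin d → ℝ) (S : Finset (Fin k)) : ℝ :=
  ∑ f ∈ univ.filter (fun f : Fin d → Option (Fin k) => armset f = S),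
    (Phi a y (a opt) 1 f - Phi a y 0 1 f)

def mS (a : Fin k → Fin d → ℝ) (y : Fin d → ℝ) (S : Finset (Fin k)) : ℝ :=
  ∑ f ∈ univ.filter (fun f : Fin d → Option (Fin k) => armset f = S),
    Phi a y 0 1 f

lemma det_Gm_expand (a : Fin k → Fin d → ℝ) (y : Fin d → ℝ) (t : Fin k → ℝ) :
    (Gm a t).det = ∑ f : Fin d → Option (Fin k), Phi a y 0 t f := by
  have h0 : vecMulVec (0 : Fin d → ℝ) y = 0 := by
    ext i j; simp [vecMulVec_apply]
  have := det_expand a y 0 t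
  rwa [h0, add_zero] at this

lemma sum_nS (a : Fin k → Fin d → ℝ) (opt : Fin k) (y : Fin d → ℝ) (t : Fin k → ℝ) :
    (Gm a t + vecMulVec (a opt) y).det - (Gm a t).det
      = ∑ S ∈ (univ : Finset (Fin k)).powerset, (∏ i ∈ S, t i) * nS a opt y S := by
  rw [det_expand a y (a opt) t, det_Gm_expand a y t, ← Finset.sum_sub_distrib]
  rw [Finset.sum_congr rfl (fun f _ => show
      Phi a y (a opt) t f - Phi a y 0 t f
        = (∏ i ∈ armset f, t i) * (Phi a y (a opt) 1 f - Phi a y 0 1 f) by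
    rw [phi_mono a y (a opt) t f, phi_mono a y 0 t f]; ring)]
  rw [← Finset.sum_fiberwise_of_maps_to (g := armset)
    (fun f _ => Finset.mem_powerset.mpr (Finset.subset_univ (armset f)))]
  refine Finset.sum_congr rfl fun S _ => ?_
  rw [Finset.sum_congr rfl (fun f hf =>
    show _ = (∏ i ∈ S, t i) * (Phi a y (a opt) 1 f - Phi a y 0 1 f) by
      rw [(Finset.mem_filter.mp hf).2])]
  rw [← Finset.mul_sum]
  rfl

lemma sum_mS (a : Fin k → Fin d → ℝ) (y : Fin d → ℝ) (t : Fin k → ℝ) :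
    (Gm a t).det = ∑ S ∈ (univ : Finset (Fin k)).powerset, (∏ i ∈ S, t i) * mS a y S := by
  rw [det_Gm_expand a y t]
  rw [Finset.sum_congr rfl (fun f _ => phi_mono a y 0 t f)]
  rw [← Finset.sum_fiberwise_of_maps_to (g := armset)
    (fun f _ => Finset.mem_powerset.mpr (Finset.subset_univ (armset f)))]
  refine Finset.sum_congr rfl fun S _ => ?_
  rw [Finset.sum_congr rfl (fun f hf =>
    show _ = (∏ i ∈ S, t i) * Phi a y 0 1 f by
      rw [(Finset.mem_filter.mp hf).2])]
  rw [← Finset.mul_sum]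
  rfl


lemma good_structure (a : Fin k → Fin d → ℝ) (y : Fin d → ℝ)
    (f : Fin d → Option (Fin k)) (u : Fin d → ℝ)
    (hne : Phi a y u 1 f - Phi a y 0 1 f ≠ 0) :
    (∀ j1 j2, f j1 ≠ none → f j1 = f j2 → j1 = j2) ∧
      ∃ j0, ∀ j, f j = none ↔ j = j0 := by
  have hdet : (Mf a y f).det ≠ 0 := by
    intro h
    apply hne
    simp [Phi, h]
  have hinj := (phi_cases a y f).resolve_left hdet
  have hex : ∃ j0, f j0 = none := by
    by_contra h
    push_neg at h
    exact hne (by rw [phi_eq_of_allsome a y u 1 f h, sub_self])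
  obtain ⟨j0, hj0⟩ := hex
  refine ⟨hinj, j0, fun j => ⟨fun hj => ?_, fun hj => hj ▸ hj0⟩⟩
  by_contra hne'
  apply hdet
  refine Matrix.det_zero_of_row_eq hne' ?_
  show (f j).elim y a = (f j0).elim y a
  rw [hj, hj0]

lemma nS_card (a : Fin k → Fin d → ℝ) (opt : Fin k) (y : Fin d → ℝ) (S : Finset (Fin k))
    (h : nS a opt y S ≠ 0) : S.card + 1 = d := by
  obtain ⟨f, hf, hne⟩ := Finset.exists_ne_zero_of_sum_ne_zero h
  obtain ⟨hinj, j0, hj0⟩ := good_structure a y f (a opt) hne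
  have hS : armset f = S := (Finset.mem_filter.mp hf).2
  have hfil : univ.filter (fun j => f j ≠ none) = univ.erase j0 := by
    ext j
    simp only [Finset.mem_filter, Finset.mem_univ, true_and, Finset.mem_erase, and_true]
    constructor
    · intro hne' hj
      exact hne' (by rw [hj]; exact (hj0 j0).mpr rfl)
    · intro hne' hj
      exact hne' ((hj0 j).mp hj)
  have hcard := card_armset f hinj
  rw [hS, hfil, Finset.card_erase_of_mem (Finset.mem_univ j0), Finset.card_univ,
    Fintype.card_fin] at hcard
  have hd : 0 < d := j0.pos
  omega

lemma mS_card (a : Fin k → Fin d → ℝ) (y : Fin d → ℝ) (S : Finset (Fin k))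
    (h : mS a y S ≠ 0) : S.card = d := by
  obtain ⟨f, hf, hne⟩ := Finset.exists_ne_zero_of_sum_ne_zero h
  have hdet : (Mf a y f).det ≠ 0 := by
    intro h'
    exact hne (by simp [Phi, h'])
  have hinj := (phi_cases a y f).resolve_left hdet
  have hall : ∀ j, f j ≠ none := by
    intro j hj
    exact hne (phi_zero_of_none a y 1 f j hj)
  have hS : armset f = S := (Finset.mem_filter.mp hf).2
  have hfil : univ.filter (fun j => f j ≠ none) = univ := by
    ext j; simp [hall j]
  have hcard := card_armset f hinj
  rw [hS, hfil, Finset.card_univ, Fintype.card_fin] at hcard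
  exact hcard

lemma nS_eq_val (a : Fin k → Fin d → ℝ) (opt : Fin k) (y : Fin d → ℝ) (S : Finset (Fin k))
    (hcard : S.card + 1 = d) :
    nS a opt y S = (Gm a (ind S) + vecMulVec (a opt) y).det - (Gm a (ind S)).det := by
  have h := sum_nS a opt y (ind S)
  rw [Finset.sum_congr rfl (fun T _ => by rw [prod_ind S T])] at h
  rw [h, Finset.sum_eq_single_of_mem S (Finset.mem_powerset.mpr (Finset.subset_univ S))]
  · rw [if_pos (Finset.Subset.refl S), one_mul]
  · intro T _ hTS
    by_cases hsub : T ⊆ S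
    · have hlt : T.card < S.card := Finset.card_lt_card (Finset.ssubset_iff_subset_ne.mpr ⟨hsub, hTS⟩)
      have : nS a opt y T = 0 := by
        by_contra hn
        have := nS_card a opt y T hn
        omega
      rw [this, mul_zero]
    · rw [if_neg hsub, zero_mul]

lemma mS_eq_val (a : Fin k → Fin d → ℝ) (y : Fin d → ℝ) (S : Finset (Fin k))
    (hcard : S.card = d) :
    mS a y S = (Gm a (ind S)).det := by
  have h := sum_mS a y (ind S)
  rw [Finset.sum_congr rfl (fun T _ => by rw [prod_ind S T])] at h
  rw [h, Finset.sum_eq_single_of_mem S (Finset.mem_powerset.mpr (Finset.subset_univ S))]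
  · rw [if_pos (Finset.Subset.refl S), one_mul]
  · intro T _ hTS
    by_cases hsub : T ⊆ S
    · have hlt : T.card < S.card := Finset.card_lt_card (Finset.ssubset_iff_subset_ne.mpr ⟨hsub, hTS⟩)
      have : mS a y T = 0 := by
        by_contra hn
        have := mS_card a y T hn
        omega
      rw [this, mul_zero]
    · rw [if_neg hsub, zero_mul]


lemma Gm_psd (a : Fin k → Fin d → ℝ) (t : Fin k → ℝ) (ht : ∀ i, 0 ≤ t i) :
    (Gm a t).PosSemidef := by
  rw [Matrix.posSemidef_iff_dotProduct_mulVec]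
  constructor
  · show (Gm a t)ᴴ = Gm a t
    rw [Matrix.conjTranspose_eq_transpose_of_trivial, Gm_transpose]
  · intro x
    have hstar : star x = x := by
      funext j; simp
    rw [hstar, dot_Gm]
    exact Finset.sum_nonneg fun i _ => mul_nonneg (ht i) (mul_self_nonneg _)

lemma Gm_det_nonneg (a : Fin k → Fin d → ℝ) (t : Fin k → ℝ) (ht : ∀ i, 0 ≤ t i) :
    0 ≤ (Gm a t).det := by
  have hpsd := Gm_psd a t ht
  rw [hpsd.1.det_eq_prod_eigenvalues]
  refine Finset.prod_nonneg fun i _ => ?_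
  exact_mod_cast hpsd.eigenvalues_nonneg i

lemma Gm_posdef (a : Fin k → Fin d → ℝ) (t : Fin k → ℝ) (ht : ∀ i, 0 ≤ t i)
    (h : ∀ v : Fin d → ℝ, v ≠ 0 → ∃ i, t i ≠ 0 ∧ a i ⬝ᵥ v ≠ 0) :
    (Gm a t).PosDef := by
  refine Matrix.posDef_iff_dotProduct_mulVec.mpr ⟨(Gm_psd a t ht).1, fun x hx => ?_⟩
  have hstar : star x = x := by funext j; simp
  rw [hstar, dot_Gm]
  obtain ⟨i0, hi0, hdot⟩ := h x hx
  refine Finset.sum_pos' (fun i _ => mul_nonneg (ht i) (mul_self_nonneg _)) ⟨i0, Finset.mem_univ i0, ?_⟩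
  have : 0 < t i0 := lt_of_le_of_ne (ht i0) (Ne.symm hi0)
  exact mul_pos this (mul_self_pos.mpr hdot)

lemma det_eq_zero_of_card_lt (A : Matrix (Fin d) (Fin d) ℝ) (F : Finset (Fin d → ℝ))
    (hF : F.card < d) (hA : ∀ v, A *ᵥ v ∈ Submodule.span ℝ (F : Set (Fin d → ℝ))) :
    A.det = 0 := by
  by_contra h
  have hA' : IsUnit A.det := Ne.isUnit h
  have hsurj : ∀ w : Fin d → ℝ, w ∈ Submodule.span ℝ (F : Set (Fin d → ℝ)) := by
    intro w
    have hw : A *ᵥ (A⁻¹ *ᵥ w) = w := by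
      rw [Matrix.mulVec_mulVec, Matrix.mul_nonsing_inv _ hA', Matrix.one_mulVec]
    rw [← hw]
    exact hA _
  have htop : Submodule.span ℝ (F : Set (Fin d → ℝ)) = ⊤ := Submodule.eq_top_iff'.mpr hsurj
  have h1 : Module.finrank ℝ (Submodule.span ℝ (F : Set (Fin d → ℝ))) ≤ F.card :=
    finrank_span_finset_le_card F
  rw [htop, finrank_top, Module.finrank_fin_fun] at h1
  omega


lemma Gm_ind_mem (a : Fin k → Fin d → ℝ) (S : Finset (Fin k)) (v : Fin d → ℝ) :
    Gm a (ind S) *ᵥ v ∈ Submodule.span ℝ ((S.image a : Finset (Fin d → ℝ)) : Set (Fin d → ℝ)) := by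
  rw [Gm_mulVec]
  refine Submodule.sum_mem _ fun i _ => ?_
  by_cases hi : i ∈ S
  · exact Submodule.smul_mem _ _ (Submodule.subset_span
      (Finset.mem_coe.mpr (Finset.mem_image_of_mem a hi)))
  · have : ind S i = 0 := by simp [ind, hi]
    rw [this, zero_mul, zero_smul]
    exact Submodule.zero_mem _

lemma det_Gm_ind_zero (a : Fin k → Fin d → ℝ) (S : Finset (Fin k)) (hcard : S.card < d) :
    (Gm a (ind S)).det = 0 := by
  refine det_eq_zero_of_card_lt _ (S.image a) (lt_of_le_of_lt (Finset.card_image_le) hcard)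
    (Gm_ind_mem a S)

lemma exists_perp (a : Fin k → Fin d → ℝ) (S : Finset (Fin k)) (hcard : S.card < d) :
    ∃ v : Fin d → ℝ, v ≠ 0 ∧ ∀ i ∈ S, a i ⬝ᵥ v = 0 := by
  obtain ⟨v, hv0, hv⟩ := (Matrix.exists_mulVec_eq_zero_iff).mpr (det_Gm_ind_zero a S hcard)
  refine ⟨v, hv0, fun i hi => ?_⟩
  have h0 : v ⬝ᵥ (Gm a (ind S) *ᵥ v) = 0 := by rw [hv]; simp
  rw [dot_Gm] at h0
  have hterm := (Finset.sum_eq_zero_iff_of_nonneg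
    (fun i _ => mul_nonneg (ind_nonneg S i) (mul_self_nonneg _))).mp h0 i (Finset.mem_univ i)
  have hind : ind S i = 1 := by simp [ind, hi]
  rw [hind, one_mul, mul_self_eq_zero] at hterm
  exact hterm

lemma nS_perp (a : Fin k → Fin d → ℝ) (opt : Fin k) (y : Fin d → ℝ) (S : Finset (Fin k))
    (hn : nS a opt y S ≠ 0) (v : Fin d → ℝ) (hv0 : v ≠ 0)
    (hperp : ∀ i ∈ S, a i ⬝ᵥ v = 0) : a opt ⬝ᵥ v ≠ 0 := by
  intro hopt
  apply hn
  have hvG : v ᵥ* Gm a (ind S) = 0 := by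
    rw [vecMul_Gm]
    refine Finset.sum_eq_zero fun i _ => ?_
    by_cases hi : i ∈ S
    · rw [hperp i hi, mul_zero, zero_smul]
    · have : ind S i = 0 := by simp [ind, hi]
      rw [this, zero_mul, zero_smul]
  have hdet1 : (Gm a (ind S)).det = 0 := by
    rw [← Matrix.exists_vecMul_eq_zero_iff]
    exact ⟨v, hv0, hvG⟩
  have hdet2 : (Gm a (ind S) + vecMulVec (a opt) y).det = 0 := by
    rw [← Matrix.exists_vecMul_eq_zero_iff]
    refine ⟨v, hv0, ?_⟩
    rw [Matrix.vecMul_add, hvG, vecMul_vecMulVec, dotProduct_comm, hopt, zero_smul, add_zero]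
  rw [nS_eq_val a opt y S (nS_card a opt y S hn), hdet1, hdet2, sub_zero]

lemma nS_opt_not_mem (a : Fin k → Fin d → ℝ) (opt : Fin k) (y : Fin d → ℝ) (S : Finset (Fin k))
    (hn : nS a opt y S ≠ 0) : opt ∉ S := by
  intro hopt
  have hcard := nS_card a opt y S hn
  obtain ⟨v, hv0, hperp⟩ := exists_perp a S (by omega)
  exact nS_perp a opt y S hn v hv0 hperp (hperp opt hopt)

lemma nS_q_pos (a : Fin k → Fin d → ℝ) (opt : Fin k) (y : Fin d → ℝ) (S : Finset (Fin k))
    (hn : nS a opt y S ≠ 0) : 0 < (Gm a (ind (insert opt S))).det := by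
  refine Matrix.PosDef.det_pos (Gm_posdef a _ (ind_nonneg _) ?_)
  intro v hv0
  by_cases hall : ∀ i ∈ S, a i ⬝ᵥ v = 0
  · refine ⟨opt, ?_, nS_perp a opt y S hn v hv0 hall⟩
    simp [ind]
  · push_neg at hall
    obtain ⟨i, hiS, hi⟩ := hall
    refine ⟨i, ?_, hi⟩
    simp [ind, Finset.mem_insert_of_mem hiS]


lemma mS_nonneg (a : Fin k → Fin d → ℝ) (y : Fin d → ℝ) (S : Finset (Fin k)) :
    0 ≤ mS a y S := by
  by_cases h : mS a y S = 0
  · rw [h]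
  · rw [mS_eq_val a y S (mS_card a y S h)]
    exact Gm_det_nonneg a _ (ind_nonneg _)

theorem key_bound (a : Fin k → Fin d → ℝ) (opt : Fin k) (y : Fin d → ℝ) :
    ∃ K : ℝ, 0 ≤ K ∧ ∀ t : Fin k → ℝ, (∀ i, 0 ≤ t i) → IsUnit (Gm a t).det →
      |y ⬝ᵥ ((Gm a t)⁻¹ *ᵥ a opt)| * t opt ≤ K := by
  classical
  set K : ℝ := ∑ S ∈ (univ : Finset (Fin k)).powerset,
    |nS a opt y S| / (Gm a (ind (insert opt S))).det with hK
  have hK0 : 0 ≤ K := Finset.sum_nonneg fun S _ =>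
    div_nonneg (abs_nonneg _) (Gm_det_nonneg a _ (ind_nonneg _))
  refine ⟨K, hK0, fun t ht hu => ?_⟩
  have hdet0 : 0 < (Gm a t).det := lt_of_le_of_ne (Gm_det_nonneg a t ht) (Ne.symm hu.ne_zero)
  -- the matrix determinant lemma
  have hW : Gm a t + vecMulVec (a opt) y
      = Gm a t * (1 + (Gm a t)⁻¹ * vecMulVec (a opt) y) := by
    rw [Matrix.mul_add, mul_one, ← Matrix.mul_assoc, Matrix.mul_nonsing_inv _ hu,
      Matrix.one_mul]
  have hdetW : (Gm a t + vecMulVec (a opt) y).det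
      = (Gm a t).det * (1 + y ⬝ᵥ ((Gm a t)⁻¹ *ᵥ a opt)) := by
    rw [hW, Matrix.det_mul]
    congr 1
    rw [mul_vecMulVec, vecMulVec_eq Unit, Matrix.det_one_add_replicateCol_mul_replicateRow]
  have hval : y ⬝ᵥ ((Gm a t)⁻¹ *ᵥ a opt)
      = ((Gm a t + vecMulVec (a opt) y).det - (Gm a t).det) / (Gm a t).det := by
    rw [hdetW]
    field_simp
    ring
  -- the main bound
  have hmain : |(Gm a t + vecMulVec (a opt) y).det - (Gm a t).det| * t opt
      ≤ K * (Gm a t).det := by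
    rw [sum_nS a opt y t]
    have habs : |∑ S ∈ (univ : Finset (Fin k)).powerset, (∏ i ∈ S, t i) * nS a opt y S|
        ≤ ∑ S ∈ (univ : Finset (Fin k)).powerset, (∏ i ∈ S, t i) * |nS a opt y S| := by
      refine le_trans (Finset.abs_sum_le_sum_abs _ _) ?_
      refine Finset.sum_le_sum fun S _ => ?_
      rw [abs_mul, abs_of_nonneg (Finset.prod_nonneg fun i _ => ht i)]
    calc |∑ S ∈ (univ : Finset (Fin k)).powerset, (∏ i ∈ S, t i) * nS a opt y S| * t opt
        ≤ (∑ S ∈ (univ : Finset (Fin k)).powerset, (∏ i ∈ S, t i) * |nS a opt y S|) * t opt :=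
          mul_le_mul_of_nonneg_right habs (ht opt)
      _ = ∑ S ∈ (univ : Finset (Fin k)).powerset,
            (∏ i ∈ S, t i) * |nS a opt y S| * t opt := Finset.sum_mul _ _ _
      _ ≤ ∑ S ∈ (univ : Finset (Fin k)).powerset,
            (|nS a opt y S| / (Gm a (ind (insert opt S))).det) * (Gm a t).det := ?_
      _ = K * (Gm a t).det := (Finset.sum_mul _ _ _).symm
    refine Finset.sum_le_sum fun S _ => ?_
    by_cases h0 : nS a opt y S = 0
    · simp [h0]
    · have hq : 0 < (Gm a (ind (insert opt S))).det := nS_q_pos a opt y S h0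
      have hno : opt ∉ S := nS_opt_not_mem a opt y S h0
      have hcard : S.card + 1 = d := nS_card a opt y S h0
      have hcardins : (insert opt S).card = d := by
        rw [Finset.card_insert_of_notMem hno]; omega
      have hms : mS a y (insert opt S) = (Gm a (ind (insert opt S))).det :=
        mS_eq_val a y _ hcardins
      have hsingle : (∏ i ∈ insert opt S, t i) * mS a y (insert opt S) ≤ (Gm a t).det := by
        rw [sum_mS a y t]
        refine Finset.single_le_sum (f := fun T => (∏ i ∈ T, t i) * mS a y T)
          (fun T _ => mul_nonneg (Finset.prod_nonneg fun i _ => ht i) (mS_nonneg a y T))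
          (Finset.mem_powerset.mpr (Finset.subset_univ _))
      rw [Finset.prod_insert hno, hms] at hsingle
      have h1 : (∏ i ∈ S, t i) * |nS a opt y S| * t opt
          = (|nS a opt y S| / (Gm a (ind (insert opt S))).det)
            * (t opt * (∏ i ∈ S, t i) * (Gm a (ind (insert opt S))).det) := by
        field_simp
      rw [h1]
      exact mul_le_mul_of_nonneg_left hsingle (div_nonneg (abs_nonneg _) hq.le)
  -- conclude
  rw [hval, abs_div, abs_of_pos hdet0, div_mul_eq_mul_div, div_le_iff₀ hdet0]
  exact hmain

end Stmt16Aux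
end


/-- For a consistent policy (expected suboptimal play counts `O(n^p)` for every `p > 0`,
expected optimal play count `Ω(n)`), for every `y` orthogonal to the unique optimal arm `x*`,
`log n · yᵀ Ḡ_n⁻¹ x* → 0`, where `Ḡ_n = Σ_x E[T_x(n)] x xᵀ`. -/
theorem stmt16 {d k : ℕ} (a : Fin k → (Fin d → ℝ)) (opt : Fin k)
    (t : Fin k → ℕ → ℝ) (ht0 : ∀ i n, 0 ≤ t i n)
    (hopt : ∃ c > 0, ∀ᶠ n : ℕ in atTop, c * n ≤ t opt n)
    (hsub : ∀ i, i ≠ opt → ∀ p > 0, ∃ C : ℝ, ∀ n : ℕ, t i n ≤ C * (n : ℝ) ^ p)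
    (Gbar : ℕ → Matrix (Fin d) (Fin d) ℝ)
    (hGbar : ∀ n, Gbar n = ∑ i, t i n • vecMulVec (a i) (a i))
    (hinv : ∀ᶠ n : ℕ in atTop, IsUnit (Gbar n).det) :
    ∀ y : Fin d → ℝ, y ⬝ᵥ a opt = 0 →
      Tendsto (fun n : ℕ => Real.log n * (y ⬝ᵥ (Gbar n)⁻¹.mulVec (a opt)))
        atTop (nhds 0) := by
  intro y _hy
  obtain ⟨K, hK0, hK⟩ := Stmt16Aux.key_bound a opt y
  obtain ⟨c, hc, hev⟩ := hopt
  have hG : ∀ n, Gbar n = Stmt16Aux.Gm a (fun i => t i n) := fun n => hGbar n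
  have hbound : ∀ᶠ n : ℕ in atTop, ‖Real.log n * (y ⬝ᵥ (Gbar n)⁻¹.mulVec (a opt))‖
      ≤ (K / c) * (Real.log n / n) := by
    filter_upwards [hev, hinv, Filter.eventually_ge_atTop 1] with n hn hun h1
    have hn1 : (1:ℝ) ≤ (n:ℝ) := by exact_mod_cast h1
    have hn0 : (0:ℝ) < c * n := mul_pos hc (by linarith)
    have htop : 0 < t opt n := lt_of_lt_of_le hn0 hn
    rw [hG n] at hun
    have hval := hK (fun i => t i n) (fun i => ht0 i n) hun
    have habs : |y ⬝ᵥ (Gbar n)⁻¹.mulVec (a opt)| ≤ K / (c * n) := by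
      rw [hG n]
      refine le_trans ((le_div_iff₀ htop).mpr hval) ?_
      exact div_le_div_of_nonneg_left hK0 hn0 hn
    rw [Real.norm_eq_abs, abs_mul, abs_of_nonneg (Real.log_nonneg hn1)]
    calc Real.log n * |y ⬝ᵥ (Gbar n)⁻¹.mulVec (a opt)|
        ≤ Real.log n * (K / (c * n)) :=
          mul_le_mul_of_nonneg_left habs (Real.log_nonneg hn1)
      _ = (K / c) * (Real.log n / n) := by
          field_simp
  have hzero : Tendsto (fun n : ℕ => (K / c) * (Real.log n / n)) atTop (nhds 0) := by
    have h1 : Tendsto (fun x : ℝ => Real.log x / x) atTop (nhds 0) := by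
      simpa using Real.isLittleO_log_id_atTop.tendsto_div_nhds_zero
    have h2 : Tendsto (fun n : ℕ => Real.log n / (n:ℝ)) atTop (nhds 0) := by
      exact h1.comp tendsto_natCast_atTop_atTop
    simpa using h2.const_mul (K / c)
  exact squeeze_zero_norm' hbound hzero
end
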